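/- Let d ≥ 3, and let σ, γ ∈ S_d satisfy γ² = id and γ∘σ∘γ = σ⁻¹, and set γ₁ = γ∘σ (so that γ₁ is an involution with γ₁∘σ∘γ₁ = σ⁻¹). Suppose τ ∈ S_d is a 3-cycle satisfying γ₁∘(τ∘σ)∘γ₁ = (τ∘σ)⁻¹. Then there exists a unique ordered pair (t₁, t₂) of transpositions in S_d with τ = t₂ ∘ t₁ such that γ₁∘(t₁∘σ)∘γ₁ = (t₁∘σ)⁻¹. -/

import Mathlib

open Equiv Equiv.Perm

/-- If `γ² = id`, `γσγ = σ⁻¹`, `γ₁ = γ∘σ`, and `τ` is a 3-cycle with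
`γ₁(τσ)γ₁ = (τσ)⁻¹`, then there is a unique ordered pair of transpositions `(t₁, t₂)`
with `τ = t₂ ∘ t₁` and `γ₁(t₁σ)γ₁ = (t₁σ)⁻¹`. -/
theorem unique_real_decomposition_of_three_cycle_shifted
    (d : ℕ) (hd : 3 ≤ d) (σ γ τ : Perm (Fin d))
    (hγ : γ * γ = 1) (hσ : γ * σ * γ = σ⁻¹)
    (γ₁ : Perm (Fin d)) (hγ₁ : γ₁ = γ * σ)
    (hτ : τ.IsThreeCycle) (hreal : γ₁ * (τ * σ) * γ₁ = (τ * σ)⁻¹) :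
    ∃! p : Perm (Fin d) × Perm (Fin d),
      p.1.IsSwap ∧ p.2.IsSwap ∧ τ = p.2 * p.1 ∧
        γ₁ * (p.1 * σ) * γ₁ = (p.1 * σ)⁻¹ := by
  -- basic algebra
  set c : Perm (Fin d) := σ * γ₁ with hc
  have hσ' : γ * σ = σ⁻¹ * γ := by rw [← hσ, mul_assoc, mul_assoc, hγ, mul_one]
  have hγ₁σ : γ₁ * σ * γ₁ = σ⁻¹ := by
    rw [hγ₁]
    calc γ * σ * σ * (γ * σ) = (γ * σ) * (σ * γ) * σ := by group
      _ = (σ⁻¹ * γ) * (σ * γ) * σ := by rw [hσ']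
      _ = σ⁻¹ * (γ * σ * γ) * σ := by group
      _ = σ⁻¹ * σ⁻¹ * σ := by rw [hσ]
      _ = σ⁻¹ := by group
  have hcc : c * c = 1 := by
    rw [hc]
    calc σ * γ₁ * (σ * γ₁) = σ * (γ₁ * σ * γ₁) := by group
      _ = σ * σ⁻¹ := by rw [hγ₁σ]
      _ = 1 := by group
  have hcinv : c⁻¹ = c := inv_eq_of_mul_eq_one_right hcc
  have hccpt : ∀ w : Fin d, c (c w) = w := by
    intro w
    have := Equiv.ext_iff.mp hcc w
    simpa [Perm.mul_apply] using this
  -- key equivalence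
  have key : ∀ t : Perm (Fin d),
      (γ₁ * (t * σ) * γ₁ = (t * σ)⁻¹) ↔ c * t * c = t⁻¹ := by
    intro t
    rw [hc]
    constructor
    · intro h
      calc σ * γ₁ * t * (σ * γ₁) = σ * (γ₁ * (t * σ) * γ₁) := by group
        _ = σ * (t * σ)⁻¹ := by rw [h]
        _ = t⁻¹ := by group
    · intro h
      calc γ₁ * (t * σ) * γ₁ = σ⁻¹ * (σ * γ₁ * t * (σ * γ₁)) := by group
        _ = σ⁻¹ * t⁻¹ := by rw [h]
        _ = (t * σ)⁻¹ := by group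
  have hcτ : c * τ = τ⁻¹ * c := by
    have h := (key τ).mp hreal
    calc c * τ = (c * τ * c) * c⁻¹ := by group
      _ = τ⁻¹ * c := by rw [h, hcinv]
  have hcτpt : ∀ w : Fin d, c (τ w) = τ⁻¹ (c w) := by
    intro w
    have := Equiv.ext_iff.mp hcτ w
    simpa [Perm.mul_apply] using this
  -- order 3
  have hτ3 : ∀ w : Fin d, τ (τ (τ w)) = w := by
    intro w
    have h := pow_orderOf_eq_one τ
    rw [hτ.orderOf] at h
    have := Equiv.ext_iff.mp h w
    simpa [pow_succ, Perm.mul_apply] using this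
  -- find the fixed point of c on the support of τ
  have hsne : τ.support.Nonempty := by
    rw [← Finset.card_pos, hτ.card_support]; norm_num
  obtain ⟨x₀, hx₀⟩ := hsne
  have hτx₀ : τ x₀ ≠ x₀ := mem_support.mp hx₀
  have hτ2x₀ : τ (τ x₀) ≠ τ x₀ := mem_support.mp (apply_mem_support.mpr hx₀)
  have hcx₀supp : c x₀ ∈ τ.support := by
    rw [← support_inv, mem_support]
    intro h
    have h2 : c (τ x₀) = c x₀ := by rw [hcτpt, h]
    exact hτx₀ (c.injective h2)
  -- auxiliary: find x with τ x ≠ x and c x = x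
  have hfix : ∃ x : Fin d, τ x ≠ x ∧ c x = x := by
    have hτ3x₀' : τ (τ x₀) ≠ x₀ := by
      intro h
      exact hτx₀ ((congrArg τ h).symm.trans (hτ3 x₀))
    have hsupp₀ : τ.support = {x₀, τ x₀, τ (τ x₀)} := by
      refine (Finset.eq_of_subset_of_card_le ?_ ?_).symm
      · intro w hw
        simp only [Finset.mem_insert, Finset.mem_singleton] at hw
        rcases hw with rfl | rfl | rfl
        · exact hx₀
        · exact apply_mem_support.mpr hx₀
        · exact apply_mem_support.mpr (apply_mem_support.mpr hx₀)
      · rw [hτ.card_support,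
          Finset.card_insert_of_notMem (by simp [Ne.symm hτx₀, Ne.symm hτ3x₀']),
          Finset.card_insert_of_notMem (by simp [Ne.symm hτ2x₀]),
          Finset.card_singleton]
    have hmem := hcx₀supp
    rw [hsupp₀] at hmem
    simp only [Finset.mem_insert, Finset.mem_singleton] at hmem
    have hτ3x₀ : τ (τ (τ x₀)) = x₀ := hτ3 x₀
    rcases hmem with h | h | h
    · exact ⟨x₀, hτx₀, h⟩
    · -- c x₀ = τ x₀; then c fixes τ (τ x₀)
      have hcy : c (τ x₀) = x₀ := by
        rw [hcτpt, h]
        exact τ.injective (by rw [coe_inv, apply_symm_apply])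
      have hcz : c (τ (τ x₀)) = τ (τ x₀) := by
        rw [hcτpt, hcy]
        exact τ.injective (by rw [coe_inv, apply_symm_apply, hτ3x₀])
      refine ⟨τ (τ x₀), ?_, hcz⟩
      rw [hτ3x₀]
      intro h'
      exact hτx₀ ((congrArg τ h').trans hτ3x₀)
    · -- c x₀ = τ (τ x₀); then c fixes τ x₀
      have hcy : c (τ x₀) = τ x₀ := by
        rw [hcτpt, h]
        exact τ.injective (by rw [coe_inv, apply_symm_apply])
      exact ⟨τ x₀, hτ2x₀, hcy⟩
  obtain ⟨x, hτx, hcx⟩ := hfix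
  set y := τ x with hy
  set z := τ y with hz
  have hτz : τ z = x := hτ3 x
  have hxy : x ≠ y := hτx.symm
  have hyz : y ≠ z := by
    intro h
    have h' : τ y = y := by rw [← hz, ← h]
    exact hτx (hτz.symm.trans ((congrArg τ h').trans h')).symm
  have hxz : x ≠ z := by
    intro h
    exact hxy (by rw [hy, h, hτz]; exact h.symm)
  -- c swaps y and z
  have hcy : c y = z := by
    rw [hy, hcτpt, hcx]
    exact τ.injective (by rw [coe_inv, apply_symm_apply, hτz])
  have hcz : c z = y := by
    rw [hz, hcτpt, hcy]
    exact τ.injective (by rw [coe_inv, apply_symm_apply])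
  -- support of τ
  have hsupp : τ.support = {x, y, z} := by
    refine (Finset.eq_of_subset_of_card_le ?_ ?_).symm
    · intro w hw
      simp only [Finset.mem_insert, Finset.mem_singleton] at hw
      rcases hw with rfl | rfl | rfl
      · exact mem_support.mpr hτx
      · exact apply_mem_support.mpr (mem_support.mpr hτx)
      · exact apply_mem_support.mpr (apply_mem_support.mpr (mem_support.mpr hτx))
    · rw [hτ.card_support,
        Finset.card_insert_of_notMem (by simp [hxy, hxz]),
        Finset.card_insert_of_notMem (by simp [hyz]),
        Finset.card_singleton]
  -- τ = swap x y * swap y z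
  have hτeq : τ = swap x y * swap y z := by
    ext w
    rw [Perm.mul_apply]
    by_cases hwx : w = x
    · subst hwx
      rw [swap_apply_of_ne_of_ne hxy hxz, swap_apply_left, ← hy]
    · by_cases hwy : w = y
      · subst hwy
        rw [swap_apply_left, swap_apply_of_ne_of_ne (Ne.symm hxz) (Ne.symm hyz), ← hz]
      · by_cases hwz : w = z
        · subst hwz
          rw [swap_apply_right, swap_apply_right, hτz]
        · have hw : w ∉ τ.support := by
            rw [hsupp]
            simp [hwx, hwy, hwz]
          rw [notMem_support.mp hw, swap_apply_of_ne_of_ne hwy hwz,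
            swap_apply_of_ne_of_ne hwx hwy]
  -- the real condition for swap y z
  have hswapyz : γ₁ * (swap y z * σ) * γ₁ = (swap y z * σ)⁻¹ := by
    rw [key]
    rw [show (swap y z)⁻¹ = swap y z from swap_inv y z]
    calc c * swap y z * c = c * swap y z * c⁻¹ := by rw [hcinv]
      _ = swap (c y) (c z) := (swap_apply_apply c y z).symm
      _ = swap y z := by rw [hcy, hcz, swap_comm]
  refine ⟨(swap y z, swap x y), ⟨⟨y, z, hyz, rfl⟩, ⟨x, y, hxy, rfl⟩, hτeq, hswapyz⟩, ?_⟩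
  rintro ⟨t₁, t₂⟩ ⟨⟨a, b, hab, rfl⟩, ht₂, hτ12, hrealt⟩
  simp only at hτ12 hrealt ht₂ ⊢
  -- t₂ is determined
  have ht₂eq : t₂ = τ * swap a b := by
    rw [hτ12, mul_assoc, swap_mul_self, mul_one]
  -- the star identity : c b = swap a b (c a)
  have hct : c * swap a b * c = swap a b := by
    have h := (key _).mp hrealt
    rwa [swap_inv] at h
  have hstar : c b = swap a b (c a) := by
    have h := Equiv.ext_iff.mp hct (c a)
    simp only [Perm.mul_apply, hccpt] at h
    rw [← h, swap_apply_left]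
  -- a and b are in the support of τ
  have key2 : ∀ u v : Fin d, u ≠ v → τ * swap a b = τ * swap u v →
      u ∈ τ.support := by
    intro u v huv huveq
    by_contra hu
    have hτu : τ u = u := notMem_support.mp hu
    have hsq : ∀ w : Fin d, τ (swap u v (τ (swap u v w))) = w := by
      intro w
      obtain ⟨p, q, hpq, hpe⟩ := ht₂
      have h1 : t₂ * t₂ = 1 := by rw [hpe]; exact swap_mul_self p q
      have := Equiv.ext_iff.mp h1 w
      rw [ht₂eq, huveq] at this
      simpa [Perm.mul_apply] using this
    by_cases hv : v ∈ τ.support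
    · have h1 := hsq u
      rw [swap_apply_left] at h1
      have hτv : τ v ≠ v := mem_support.mp hv
      have hτvu : τ v ≠ u := by
        intro h; exact hu (h ▸ apply_mem_support.mpr hv)
      rw [swap_apply_of_ne_of_ne hτvu hτv] at h1
      exact hu (h1 ▸ apply_mem_support.mpr (apply_mem_support.mpr hv))
    · obtain ⟨w, hw⟩ : τ.support.Nonempty := by
        rw [← Finset.card_pos, hτ.card_support]; norm_num
      have hwu : w ≠ u := fun h => hu (h ▸ hw)
      have hwv : w ≠ v := fun h => hv (h ▸ hw)
      have hτwu : τ w ≠ u := fun h => hu (h ▸ apply_mem_support.mpr hw)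
      have hτwv : τ w ≠ v := fun h => hv (h ▸ apply_mem_support.mpr hw)
      have h1 := hsq w
      rw [swap_apply_of_ne_of_ne hwu hwv, swap_apply_of_ne_of_ne hτwu hτwv] at h1
      have h2 := hτ3 w
      rw [h1] at h2
      exact mem_support.mp hw h2
  have ha : a ∈ τ.support := key2 a b hab rfl
  have hb : b ∈ τ.support := key2 b a hab.symm (by rw [swap_comm])
  rw [hsupp] at ha hb
  simp only [Finset.mem_insert, Finset.mem_singleton] at ha hb
  -- finish: t₁ = swap y z
  have ht₁ : swap a b = swap y z := by
    rcases ha with rfl | rfl | rfl <;> rcases hb with rfl | rfl | rfl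
    · exact absurd rfl hab
    · -- a = x, b = y : contradiction via hstar
      rw [hcx, hcy, swap_apply_left] at hstar
      exact absurd hstar.symm hyz
    · -- a = x, b = z
      rw [hcx, hcz, swap_apply_left] at hstar
      exact absurd hstar hyz
    · -- a = y, b = x
      rw [hcx, hcy, swap_apply_of_ne_of_ne hyz.symm (Ne.symm hxz)] at hstar
      exact absurd hstar hxz
    · exact absurd rfl hab
    · -- a = y, b = z
      rfl
    · -- a = z, b = x
      rw [hcx, hcz, swap_apply_of_ne_of_ne hyz hxy.symm] at hstar
      exact absurd hstar hxy
    · -- a = z, b = y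
      rw [swap_comm]
    · exact absurd rfl hab
  have ht₂' : t₂ = swap x y := by
    rw [ht₂eq, ht₁, hτeq, mul_assoc, swap_mul_self, mul_one]
  rw [ht₁, ht₂']
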